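/- arXiv:1705.02278 — 2 statements merged into one kernel-verified Lean document; each statement's English description precedes it below -/
import Mathlib

section
/- Fix a unit vector n ∈ ℝ^J and d ∈ ℝ^J with ⟨d, n⟩ = 1, and consider the half-space G = {x : ⟨x, n⟩ ≥ 0}. Given a continuous path f with f(0) ∈ G, the pair (h, g) defined by g(t) = (sup_{s≤t} (−⟨f(s), n⟩) ∨ 0) · d and h = f + g solves the extended Skorokhod problem {(d, n, 0)}: h(t) ∈ G for all t, h(0) = f(0), and g(t) − g(s) ∈ cone[⋃_{u∈(s,t]} d(h(u))] for all 0 ≤ s < t, where d(x) = cone{d} if ⟨x, n⟩ = 0 and {0} otherwise. -/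
open scoped BigOperators

noncomputable section

/-- The convex cone generated by a set of vectors. -/
def coneHull {J : ℕ} (S : Set (EuclideanSpace ℝ (Fin J))) : Set (EuclideanSpace ℝ (Fin J)) :=
  {v | ∃ (k : ℕ) (lam : Fin k → ℝ) (w : Fin k → EuclideanSpace ℝ (Fin J)),
    (∀ j, 0 ≤ lam j) ∧ (∀ j, w j ∈ S) ∧ v = ∑ j, lam j • w j}

theorem stmt15 (J : ℕ) (n d : EuclideanSpace ℝ (Fin J)) (hn : ‖n‖ = 1)
    (hd : (inner ℝ d n : ℝ) = 1)
    (G : Set (EuclideanSpace ℝ (Fin J))) (hG : G = {x | 0 ≤ (inner ℝ x n : ℝ)})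
    (f g h : ℝ → EuclideanSpace ℝ (Fin J)) (hf : Continuous f) (hf0 : f 0 ∈ G)
    (hgdef : ∀ t : ℝ, g t = (max (⨆ s : Set.Icc (0:ℝ) t, -(inner ℝ (f s.1) n : ℝ)) 0) • d)
    (hhdef : ∀ t : ℝ, h t = f t + g t) :
    (∀ t : ℝ, 0 ≤ t → h t ∈ G) ∧ h 0 = f 0 ∧
      ∀ s t : ℝ, 0 ≤ s → s < t →
        g t - g s ∈ coneHull (⋃ u ∈ Set.Ioc s t,
          coneHull {v | (inner ℝ (h u) n : ℝ) = 0 ∧ v = d}) := by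
  set φ : ℝ → ℝ := fun t => -(inner ℝ (f t) n : ℝ) with hφ
  have hφc : Continuous φ := (Continuous.inner (𝕜 := ℝ) hf continuous_const).neg
  set S : ℝ → ℝ := fun t => ⨆ s : Set.Icc (0:ℝ) t, φ s.1 with hS
  set L : ℝ → ℝ := fun t => max (S t) 0 with hL
  have hbdd : ∀ t : ℝ, BddAbove (Set.range fun s : Set.Icc (0:ℝ) t => φ s.1) := by
    intro t
    rw [← Set.image_eq_range]
    exact (isCompact_Icc.image_of_continuousOn hφc.continuousOn).bddAbove
  have hle : ∀ t u : ℝ, u ∈ Set.Icc (0:ℝ) t → φ u ≤ S t := by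
    intro t u hu
    exact le_ciSup (hbdd t) ⟨u, hu⟩
  -- inner product of h
  have hinner : ∀ t : ℝ, (inner ℝ (h t) n : ℝ) = (inner ℝ (f t) n : ℝ) + L t := by
    intro t
    rw [hhdef t, hgdef t, inner_add_left, real_inner_smul_left, hd, mul_one]
  have hLnn : ∀ t, 0 ≤ L t := fun t => le_max_right _ _
  have hhG : ∀ t : ℝ, 0 ≤ t → h t ∈ G := by
    intro t ht
    rw [hG]
    have h1 : -(inner ℝ (f t) n : ℝ) ≤ L t := (hle t t ⟨ht, le_refl t⟩).trans (le_max_left _ _)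
    show 0 ≤ (inner ℝ (h t) n : ℝ)
    rw [hinner t]
    linarith
  have hmono : ∀ s t : ℝ, 0 ≤ s → s ≤ t → L s ≤ L t := by
    intro s t hs hst
    have : S s ≤ S t := by
      have : Nonempty (Set.Icc (0:ℝ) s) := ⟨⟨0, le_refl 0, hs⟩⟩
      exact ciSup_le fun u => le_ciSup (hbdd t) ⟨u.1, u.2.1, u.2.2.trans hst⟩
    exact max_le_max this le_rfl
  refine ⟨hhG, ?_, ?_⟩
  · -- h 0 = f 0
    have hS0 : S 0 ≤ 0 := by
      have : Nonempty (Set.Icc (0:ℝ) 0) := ⟨⟨0, le_refl 0, le_refl 0⟩⟩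
      refine ciSup_le fun u => ?_
      have hu0 : u.1 = 0 := le_antisymm u.2.2 u.2.1
      have h0 : 0 ≤ (inner ℝ (f 0) n : ℝ) := by rw [hG] at hf0; exact hf0
      show -(inner ℝ (f u.1) n : ℝ) ≤ 0
      rw [hu0]
      linarith
    have hL0 : L 0 = 0 := max_eq_right hS0
    rw [hhdef 0, hgdef 0]
    show f 0 + L 0 • d = f 0
    rw [hL0, zero_smul, add_zero]
  · intro s t hs hst
    have hgdiff : g t - g s = (L t - L s) • d := by
      rw [hgdef t, hgdef s, ← sub_smul]
    rcases eq_or_lt_of_le (hmono s t hs hst.le) with heq | hlt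
    · -- zero increment
      rw [hgdiff, ← heq, sub_self, zero_smul]
      exact ⟨0, Fin.elim0, Fin.elim0, fun j => j.elim0, fun j => j.elim0, by simp⟩
    · -- positive increment: find maximizer u ∈ (s,t]
      have ht0 : (0:ℝ) ≤ t := hs.trans hst.le
      obtain ⟨u, hu, hmax⟩ := isCompact_Icc.exists_isMaxOn (α := ℝ)
        (Set.nonempty_Icc.mpr ht0) hφc.continuousOn
      have hSt : S t = φ u := by
        refine le_antisymm ?_ (hle t u hu)
        have : Nonempty (Set.Icc (0:ℝ) t) := ⟨⟨0, le_refl 0, ht0⟩⟩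
        exact ciSup_le fun v => hmax v.2
      have hLtpos : 0 < L t := lt_of_le_of_lt (hLnn s) hlt
      have hStpos : 0 < S t := by
        by_contra hc
        push_neg at hc
        have : L t = 0 := max_eq_right hc
        linarith
      have hLtS : L t = S t := max_eq_left hStpos.le
      have hus : s < u := by
        by_contra hc
        push_neg at hc
        have h1 : φ u ≤ S s := hle s u ⟨hu.1, hc⟩
        have h2 : S s ≤ L s := le_max_left _ _
        have h3 : L t = φ u := hLtS.trans hSt
        linarith
      have hLu : L u = φ u := by
        have h1 : φ u ≤ L u := (hle u u ⟨hu.1, le_refl u⟩).trans (le_max_left _ _)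
        have h2 : L u ≤ L t := hmono u t hu.1 hu.2
        have h3 : L t = φ u := hLtS.trans hSt
        linarith
      have hhu0 : (inner ℝ (h u) n : ℝ) = 0 := by
        rw [hinner u, hLu]
        simp [hφ]
      rw [hgdiff]
      refine ⟨1, fun _ => L t - L s, fun _ => d, fun _ => sub_nonneg.mpr hlt.le, fun _ => ?_, by simp⟩
      refine Set.mem_iUnion₂.mpr ⟨u, ⟨hus, hu.2⟩, ?_⟩
      exact ⟨1, fun _ => 1, fun _ => d, fun _ => zero_le_one, fun _ => ⟨hhu0, rfl⟩, by simp⟩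

end
end

section
/- Let G ⊆ ℝ^J be a convex polyhedron and suppose a projection map π : ℝ^J → G exists with π(x) = x for x ∈ G and π(x) − x ∈ d(π(x)) for x ∉ G, where d(y) = cone{d_i : i ∈ I(y)}, and π is continuous. Fix x̄ ∈ ∂G with I = I(x̄) and let G₀ = ⋂_{i∈I}{y : ⟨y, n_i⟩ ≥ 0}. Then there is a map π_I : ℝ^J → G₀ with π_I(y) = y for y ∈ G₀ and π_I(y) − y ∈ d_I(π_I(y)) for y ∉ G₀, where d_I(z) = cone{d_i : i ∈ I, ⟨z, n_i⟩ = 0}; namely, π_I(y) := δ^{-1}(π(x̄ + δy) − x̄) for δ > 0 small enough that x̄ + δy lies in a neighborhood where the active faces of π are contained in I. -/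
open scoped BigOperators

noncomputable section

theorem stmt18 (J N : ℕ) (n dvec : Fin N → EuclideanSpace ℝ (Fin J)) (c : Fin N → ℝ)
    (hn : ∀ i, ‖n i‖ = 1) (hd : ∀ i, (inner ℝ (dvec i) (n i) : ℝ) = 1)
    (G : Set (EuclideanSpace ℝ (Fin J)))
    (hG : G = ⋂ i, {x | c i ≤ (inner ℝ x (n i) : ℝ)})
    (π : EuclideanSpace ℝ (Fin J) → EuclideanSpace ℝ (Fin J))
    (hπcont : Continuous π) (hπran : ∀ x, π x ∈ G) (hπid : ∀ x ∈ G, π x = x)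
    (hπdir : ∀ x ∉ G, π x - x ∈
      coneHull {v | ∃ i, (inner ℝ (π x) (n i) : ℝ) = c i ∧ v = dvec i})
    (xb : EuclideanSpace ℝ (Fin J)) (hxb : xb ∈ frontier G)
    (I : Set (Fin N)) (hI : I = {i | (inner ℝ xb (n i) : ℝ) = c i})
    (G0 : Set (EuclideanSpace ℝ (Fin J)))
    (hG0 : G0 = {y | ∀ i ∈ I, 0 ≤ (inner ℝ y (n i) : ℝ)}) :
    ∃ πI : EuclideanSpace ℝ (Fin J) → EuclideanSpace ℝ (Fin J),
      (∀ y, πI y ∈ G0) ∧ (∀ y ∈ G0, πI y = y) ∧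
      (∀ y ∉ G0, πI y - y ∈
        coneHull {v | ∃ i ∈ I, (inner ℝ (πI y) (n i) : ℝ) = 0 ∧ v = dvec i}) ∧
      (∀ y ∉ G0, ∃ δ : ℝ, 0 < δ ∧ πI y = δ⁻¹ • (π (xb + δ • y) - xb)) := by
  -- G is closed, hence xb ∈ G
  have hGclosed : IsClosed G := by
    rw [hG]
    exact isClosed_iInter fun i =>
      isClosed_le continuous_const (continuous_id.inner continuous_const)
  have hxbG : xb ∈ G := hGclosed.frontier_subset hxb
  have hmemG : ∀ x, x ∈ G ↔ ∀ i, c i ≤ (inner ℝ x (n i) : ℝ) := by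
    intro x; rw [hG]; simp [Set.mem_iInter]
  have hxbI : ∀ i ∈ I, (inner ℝ xb (n i) : ℝ) = c i := by
    intro i hi; rw [hI] at hi; exact hi
  have hxbnotI : ∀ i, i ∉ I → c i < (inner ℝ xb (n i) : ℝ) := by
    intro i hi
    rcases lt_or_eq_of_le ((hmemG xb).1 hxbG i) with h | h
    · exact h
    · exact absurd (by rw [hI]; exact h.symm) hi
  -- key existence of δ
  have key : ∀ y : EuclideanSpace ℝ (Fin J), ∃ δ : ℝ, 0 < δ ∧
      (∀ i, i ∉ I → c i < (inner ℝ (π (xb + δ • y)) (n i) : ℝ)) ∧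
      (∀ i, i ∉ I → c i ≤ (inner ℝ (xb + δ • y) (n i) : ℝ)) := by
    intro y
    have hcont1 : Continuous fun δ : ℝ => xb + δ • y :=
      continuous_const.add (continuous_id.smul continuous_const)
    have hcont2 : Continuous fun δ : ℝ => π (xb + δ • y) := hπcont.comp hcont1
    have hval : π (xb + (0:ℝ) • y) = xb := by
      simpa using hπid xb hxbG
    have ev1 : ∀ᶠ δ in nhds (0:ℝ), ∀ i, i ∉ I →
        c i < (inner ℝ (π (xb + δ • y)) (n i) : ℝ) := by
      rw [Filter.eventually_all]
      intro i
      by_cases hi : i ∈ I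
      · filter_upwards with δ h; exact absurd hi h
      · have hc : Continuous fun δ : ℝ => (inner ℝ (π (xb + δ • y)) (n i) : ℝ) :=
          hcont2.inner continuous_const
        have h0 : c i < (inner ℝ (π (xb + (0:ℝ) • y)) (n i) : ℝ) := by
          rw [hval]; exact hxbnotI i hi
        have := hc.continuousAt (x := (0:ℝ))
        filter_upwards [this.eventually (eventually_gt_nhds h0)] with δ h _
        exact h
    have ev2 : ∀ᶠ δ in nhds (0:ℝ), ∀ i, i ∉ I →
        c i ≤ (inner ℝ (xb + δ • y) (n i) : ℝ) := by
      rw [Filter.eventually_all]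
      intro i
      by_cases hi : i ∈ I
      · filter_upwards with δ h; exact absurd hi h
      · have hc : Continuous fun δ : ℝ => (inner ℝ (xb + δ • y) (n i) : ℝ) :=
          hcont1.inner continuous_const
        have h0 : c i < (inner ℝ (xb + (0:ℝ) • y) (n i) : ℝ) := by
          simpa using hxbnotI i hi
        have := hc.continuousAt (x := (0:ℝ))
        filter_upwards [this.eventually (eventually_gt_nhds h0)] with δ h _
        exact h.le
    have ev : ∀ᶠ δ in nhdsWithin (0:ℝ) (Set.Ioi 0), (0 < δ) ∧
        (∀ i, i ∉ I → c i < (inner ℝ (π (xb + δ • y)) (n i) : ℝ)) ∧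
        (∀ i, i ∉ I → c i ≤ (inner ℝ (xb + δ • y) (n i) : ℝ)) := by
      have hmem : ∀ᶠ δ in nhdsWithin (0:ℝ) (Set.Ioi 0), 0 < δ :=
        eventually_mem_nhdsWithin
      filter_upwards [hmem, (ev1.and ev2).filter_mono nhdsWithin_le_nhds] with δ h1 h2
      exact ⟨h1, h2.1, h2.2⟩
    exact ev.exists
  classical
  set δf : EuclideanSpace ℝ (Fin J) → ℝ := fun y => Classical.choose (key y) with hδf
  have hδspec : ∀ y, 0 < δf y ∧
      (∀ i, i ∉ I → c i < (inner ℝ (π (xb + δf y • y)) (n i) : ℝ)) ∧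
      (∀ i, i ∉ I → c i ≤ (inner ℝ (xb + δf y • y) (n i) : ℝ)) :=
    fun y => Classical.choose_spec (key y)
  set πI : EuclideanSpace ℝ (Fin J) → EuclideanSpace ℝ (Fin J) :=
    fun y => (δf y)⁻¹ • (π (xb + δf y • y) - xb) with hπI
  have hinner : ∀ y i, (inner ℝ (πI y) (n i) : ℝ) =
      (δf y)⁻¹ * ((inner ℝ (π (xb + δf y • y)) (n i) : ℝ) - (inner ℝ xb (n i) : ℝ)) := by
    intro y i
    simp only [hπI]
    rw [real_inner_smul_left, inner_sub_left]
  refine ⟨πI, ?_, ?_, ?_, ?_⟩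
  · -- range in G0
    intro y
    rw [hG0]
    intro i hi
    rw [hinner y i, hxbI i hi]
    have h1 : c i ≤ (inner ℝ (π (xb + δf y • y)) (n i) : ℝ) :=
      (hmemG _).1 (hπran _) i
    exact mul_nonneg (inv_nonneg.2 (hδspec y).1.le) (by linarith)
  · -- identity on G0
    intro y hy
    rw [hG0] at hy
    have hxG : xb + δf y • y ∈ G := by
      rw [hmemG]
      intro i
      by_cases hi : i ∈ I
      · have h1 : (inner ℝ (xb + δf y • y) (n i) : ℝ) =
            c i + δf y * (inner ℝ y (n i) : ℝ) := by
          rw [inner_add_left, real_inner_smul_left, hxbI i hi]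
        rw [h1]
        nlinarith [hy i hi, (hδspec y).1]
      · exact (hδspec y).2.2 i hi
    have := hπid _ hxG
    rw [hπI]
    simp only [this, add_sub_cancel_left, smul_smul]
    rw [inv_mul_cancel₀ (ne_of_gt (hδspec y).1), one_smul]
  · -- cone direction
    intro y hy
    have hδpos := (hδspec y).1
    rw [hG0] at hy
    simp only [Set.mem_setOf_eq, not_forall, not_le, exists_prop] at hy
    obtain ⟨i₀, hi₀I, hi₀⟩ := hy
    have hxnotG : xb + δf y • y ∉ G := by
      rw [hmemG]
      push_neg
      refine ⟨i₀, ?_⟩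
      rw [inner_add_left, real_inner_smul_left, hxbI i₀ hi₀I]
      nlinarith
    obtain ⟨k, lam, w, hlam, hw, hsum⟩ := hπdir _ hxnotG
    refine ⟨k, fun j => (δf y)⁻¹ * lam j, w, fun j => mul_nonneg (inv_nonneg.2 hδpos.le) (hlam j), ?_, ?_⟩
    · intro j
      obtain ⟨i, hie, hwj⟩ := hw j
      have hiI : i ∈ I := by
        by_contra hiI
        exact absurd hie (ne_of_gt ((hδspec y).2.1 i hiI))
      refine ⟨i, hiI, ?_, hwj⟩
      rw [hinner y i, hie, hxbI i hiI, sub_self, mul_zero]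
    · have heq : πI y - y = (δf y)⁻¹ • (π (xb + δf y • y) - (xb + δf y • y)) := by
        simp only [hπI]
        rw [smul_sub, smul_sub, smul_add, smul_smul,
          inv_mul_cancel₀ (ne_of_gt hδpos), one_smul]
        abel
      rw [heq, hsum, Finset.smul_sum]
      congr 1
      ext j
      rw [smul_smul]
  · -- explicit form
    intro y _
    exact ⟨δf y, (hδspec y).1, rfl⟩

end
end
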